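/- Let A be an N×N real matrix with nonnegative off-diagonal entries, zero column sums, and irreducible (for every pair i ≠ j there is a sequence i = i₀, …, i_m = j with A_{i_{l+1} i_l} ≠ 0), and let τ > 0. Let f ∈ ℝ^N have strictly positive entries. Then the implicit Euler iterates u^k = (I − τA)^{-k} f converge, as k → ∞, to the unique vector w in the kernel of A with ∑_i w_i = ∑_i f_i. -/
import Mathlib


/-- `A` is irreducible: for every pair of indices `i ≠ j` there is a finite sequence
`i = i₀, i₁, …, i_m = j` with `A (i_{l+1}) (i_l) ≠ 0` for all `l`. -/
def MatrixIrreducible {N : ℕ} (A : Matrix (Fin N) (Fin N) ℝ) : Prop :=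
  ∀ i j : Fin N, i ≠ j → ∃ (m : ℕ) (c : ℕ → Fin N),
    c 0 = i ∧ c m = j ∧ ∀ l < m, A (c (l + 1)) (c l) ≠ 0

open Matrix Finset

lemma entry_formula {N : ℕ} (A : Matrix (Fin N) (Fin N) ℝ) (τ : ℝ) (y : Fin N → ℝ) (i : Fin N) :
    (((1 : Matrix (Fin N) (Fin N) ℝ) - τ • A)ᵀ).mulVec y i = y i - τ * ∑ j, A j i * y j := by
  simp only [Matrix.mulVec, Matrix.transpose_apply, dotProduct, Matrix.sub_apply,
    Matrix.smul_apply, Matrix.one_apply, smul_eq_mul, sub_mul, Finset.sum_sub_distrib,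
    ite_mul, one_mul, zero_mul, Finset.mul_sum, mul_assoc]
  rw [Finset.sum_ite_eq' Finset.univ i y]
  simp

/-- Minimum principle: if `(1-τA)ᵀ y = b ≥ 0` then `y ≥ 0`. -/
lemma minPrinciple {N : ℕ} {A : Matrix (Fin N) (Fin N) ℝ}
    (hoff : ∀ i j, i ≠ j → 0 ≤ A i j) (hsum : ∀ j, ∑ i, A i j = 0)
    {τ : ℝ} (hτ : 0 < τ) {y b : Fin N → ℝ} (hb : ∀ i, 0 ≤ b i)
    (hy : (((1 : Matrix (Fin N) (Fin N) ℝ) - τ • A)ᵀ).mulVec y = b) :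
    ∀ i, 0 ≤ y i := by
  by_contra h
  push_neg at h
  obtain ⟨i, hi⟩ := h
  obtain ⟨i₀, -, hmin⟩ := Finset.exists_min_image Finset.univ y ⟨i, Finset.mem_univ i⟩
  have hi₀ : y i₀ < 0 := lt_of_le_of_lt (hmin i (Finset.mem_univ i)) hi
  have hb0 : b i₀ = y i₀ - τ * ∑ j, A j i₀ * y j := by
    rw [← hy]; exact entry_formula A τ y i₀
  have hS : 0 ≤ ∑ j, A j i₀ * y j := by
    have h1 : ∑ j, A j i₀ * y i₀ ≤ ∑ j, A j i₀ * y j := by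
      apply Finset.sum_le_sum
      intro j _
      rcases eq_or_ne j i₀ with rfl | hne
      · exact le_refl _
      · exact mul_le_mul_of_nonneg_left (hmin j (Finset.mem_univ j)) (hoff j i₀ hne)
    calc (0:ℝ) = (∑ j, A j i₀) * y i₀ := by rw [hsum i₀, zero_mul]
    _ = ∑ j, A j i₀ * y i₀ := by rw [Finset.sum_mul]
    _ ≤ _ := h1
  have : b i₀ < 0 := by
    rw [hb0]
    have : 0 ≤ τ * ∑ j, A j i₀ * y j := mul_nonneg hτ.le hS
    linarith
  exact absurd (hb i₀) (not_le.mpr this)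

lemma det_ne {N : ℕ} {A : Matrix (Fin N) (Fin N) ℝ}
    (hoff : ∀ i j, i ≠ j → 0 ≤ A i j) (hsum : ∀ j, ∑ i, A i j = 0)
    {τ : ℝ} (hτ : 0 < τ) :
    ((1 : Matrix (Fin N) (Fin N) ℝ) - τ • A).det ≠ 0 := by
  intro hdet
  rw [← Matrix.det_transpose] at hdet
  obtain ⟨v, hv0, hv⟩ := Matrix.exists_mulVec_eq_zero_iff.mpr hdet
  have h1 : ∀ i, 0 ≤ v i := minPrinciple (b := 0) hoff hsum hτ (fun i => le_rfl) hv
  have h2 : ∀ i, 0 ≤ (-v) i := by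
    refine minPrinciple (b := 0) hoff hsum hτ (fun i => le_rfl) ?_
    rw [Matrix.mulVec_neg, hv, neg_zero]
  exact hv0 (funext fun i => le_antisymm (by simpa using h2 i) (h1 i))

/-- Strict positivity of the entries of the resolvent. -/
lemma inv_pos_entries {N : ℕ} {A : Matrix (Fin N) (Fin N) ℝ}
    (hoff : ∀ i j, i ≠ j → 0 ≤ A i j) (hsum : ∀ j, ∑ i, A i j = 0)
    (hirr : MatrixIrreducible A) {τ : ℝ} (hτ : 0 < τ) :
    ∀ i j, 0 < ((1 : Matrix (Fin N) (Fin N) ℝ) - τ • A)⁻¹ i j := by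
  intro i j
  set M := (1 : Matrix (Fin N) (Fin N) ℝ) - τ • A with hM
  have hdet : IsUnit Mᵀ.det := by
    rw [Matrix.det_transpose]; exact (det_ne hoff hsum hτ).isUnit
  set y : Fin N → ℝ := (Mᵀ)⁻¹.mulVec ((Pi.single i 1 : Fin N → ℝ)) with hydef
  have hMy : Mᵀ.mulVec y = (Pi.single i 1 : Fin N → ℝ) := by
    rw [hydef, Matrix.mulVec_mulVec, Matrix.mul_nonsing_inv _ hdet, Matrix.one_mulVec]
  have hb : ∀ k, (0:ℝ) ≤ (Pi.single i 1 : Fin N → ℝ) k := by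
    intro k; rcases eq_or_ne k i with rfl | h
    · simp
    · simp [Pi.single_apply, h]
  have hy0 : ∀ k, 0 ≤ y k := minPrinciple hoff hsum hτ hb hMy
  -- the equation at each row
  have heq : ∀ p, y p - τ * ∑ k, A k p * y k = (Pi.single i 1 : Fin N → ℝ) p := by
    intro p; rw [← congrFun hMy p, hM]; exact (entry_formula A τ y p).symm
  have hSnonneg : ∀ p, y p = 0 → 0 ≤ ∑ k, A k p * y k ∧
      (∀ k, 0 ≤ A k p * y k) := by
    intro p hp
    have hterm : ∀ k, 0 ≤ A k p * y k := by
      intro k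
      rcases eq_or_ne k p with rfl | h
      · rw [hp, mul_zero]
      · exact mul_nonneg (hoff k p h) (hy0 k)
    exact ⟨Finset.sum_nonneg fun k _ => hterm k, hterm⟩
  -- y i > 0
  have hyi : 0 < y i := by
    rcases (hy0 i).lt_or_eq with h | h
    · exact h
    · exfalso
      have h' := heq i
      rw [← h, Pi.single_eq_same] at h'
      obtain ⟨hS, -⟩ := hSnonneg i h.symm
      nlinarith
  -- propagation of zeros
  have hprop : ∀ p, p ≠ i → y p = 0 → ∀ k, A k p ≠ 0 → y k = 0 := by
    intro p hp hyp k hk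
    have h' := heq p
    rw [hyp, Pi.single_eq_of_ne hp] at h'
    obtain ⟨-, hterm⟩ := hSnonneg p hyp
    have hSz : ∑ k, A k p * y k = 0 := by nlinarith
    have := (Finset.sum_eq_zero_iff_of_nonneg (fun k _ => hterm k)).mp hSz k (Finset.mem_univ k)
    rcases mul_eq_zero.mp this with h | h
    · exact absurd h hk
    · exact h
  -- all entries positive
  have hall : ∀ p, 0 < y p := by
    intro p
    rcases (hy0 p).lt_or_eq with h | h
    · exact h
    have hyp : y p = 0 := h.symm
    exfalso
    have hpne : p ≠ i := by rintro rfl; exact hyi.ne' hyp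
    obtain ⟨m, c, hc0, hcm, hA⟩ := hirr p i hpne
    have key : ∀ l, l ≤ m → y (c l) = 0 := by
      intro l
      induction l with
      | zero => intro _; rw [hc0]; exact hyp
      | succ n ih =>
        intro hn
        have hcn : y (c n) = 0 := ih (Nat.le_of_succ_le hn)
        have hcni : c n ≠ i := by rintro hci; rw [hci] at hcn; exact hyi.ne' hcn
        exact hprop (c n) hcni hcn (c (n+1)) (hA n (Nat.lt_of_succ_le hn))
    have := key m le_rfl
    rw [hcm] at this
    exact hyi.ne' this
  -- translate back to the inverse entries
  have : y j = M⁻¹ i j := by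
    rw [hydef]
    rw [← Matrix.transpose_nonsing_inv]
    simp [Matrix.mulVec, dotProduct, Pi.single_apply, Matrix.transpose_apply]
  rw [← this]
  exact hall j

/-- Column sums of the resolvent are 1. -/
lemma inv_col_sums {N : ℕ} {A : Matrix (Fin N) (Fin N) ℝ}
    (hoff : ∀ i j, i ≠ j → 0 ≤ A i j) (hsum : ∀ j, ∑ i, A i j = 0)
    {τ : ℝ} (hτ : 0 < τ) :
    ∀ j, ∑ i, ((1 : Matrix (Fin N) (Fin N) ℝ) - τ • A)⁻¹ i j = 1 := by
  intro j
  set M := (1 : Matrix (Fin N) (Fin N) ℝ) - τ • A with hM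
  have hdet : IsUnit M.det := (det_ne hoff hsum hτ).isUnit
  set u : Fin N → ℝ := fun _ => 1 with hu
  have h1 : u ᵥ* M = u := by
    funext p
    rw [hM]
    simp only [Matrix.vecMul, dotProduct, hu, one_mul, Matrix.sub_apply, Matrix.smul_apply,
      Matrix.one_apply, smul_eq_mul, Finset.sum_sub_distrib, ← Finset.mul_sum, hsum p]
    simp
  have h2 : u ᵥ* M⁻¹ = u := by
    conv_lhs => rw [← h1]
    rw [Matrix.vecMul_vecMul, Matrix.mul_nonsing_inv _ hdet, Matrix.vecMul_one]
  have := congrFun h2 j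
  simpa [Matrix.vecMul, dotProduct, hu] using this

/-- A matrix with unit column sums preserves the sum of a vector. -/
lemma sum_mulVec {N : ℕ} {B : Matrix (Fin N) (Fin N) ℝ}
    (hcol : ∀ j, ∑ i, B i j = 1) (x : Fin N → ℝ) :
    ∑ i, B.mulVec x i = ∑ i, x i := by
  simp only [Matrix.mulVec, dotProduct]
  rw [Finset.sum_comm]
  congr 1
  funext j
  rw [← Finset.sum_mul, hcol j, one_mul]

/-- ℓ¹ contraction on sum-zero vectors for a positive column-stochastic matrix. -/
lemma l1_contraction {N : ℕ} {B : Matrix (Fin N) (Fin N) ℝ} {ε : ℝ}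
    (hpos : ∀ i j, ε ≤ B i j) (hcol : ∀ j, ∑ i, B i j = 1)
    {x : Fin N → ℝ} (hx : ∑ i, x i = 0) :
    ∑ i, |B.mulVec x i| ≤ (1 - N * ε) * ∑ i, |x i| := by
  have hBx : ∀ i, B.mulVec x i = ∑ j, (B i j - ε) * x j := by
    intro i
    simp only [Matrix.mulVec, dotProduct, sub_mul, Finset.sum_sub_distrib, ← Finset.mul_sum, hx,
      mul_zero, sub_zero]
  have h1 : ∀ i, |B.mulVec x i| ≤ ∑ j, (B i j - ε) * |x j| := by
    intro i
    rw [hBx i]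
    refine le_trans (Finset.abs_sum_le_sum_abs _ _) ?_
    apply Finset.sum_le_sum
    intro j _
    rw [abs_mul, abs_of_nonneg (sub_nonneg.mpr (hpos i j))]
  calc ∑ i, |B.mulVec x i| ≤ ∑ i, ∑ j, (B i j - ε) * |x j| :=
        Finset.sum_le_sum fun i _ => h1 i
    _ = ∑ j, (∑ i, (B i j - ε)) * |x j| := by
        rw [Finset.sum_comm]; congr 1; funext j; rw [Finset.sum_mul]
    _ = ∑ j, (1 - N * ε) * |x j| := by
        congr 1; funext j
        rw [Finset.sum_sub_distrib, hcol j, Finset.sum_const, Finset.card_univ,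
          Fintype.card_fin, nsmul_eq_mul]
    _ = (1 - N * ε) * ∑ i, |x i| := by rw [← Finset.mul_sum]

/-- For an irreducible `N × N` real matrix `A` with nonnegative off-diagonal entries
and zero column sums, any time step `τ > 0` and any strictly positive initial vector
`f`, the implicit Euler iterates `u^k = (I − τA)^{-k} f` converge, as `k → ∞`, to
the unique kernel vector `w` of `A` with `∑ i, w i = ∑ i, f i`. -/
theorem implicit_euler_tendsto_steady_state (N : ℕ) (A : Matrix (Fin N) (Fin N) ℝ)
    (hoff : ∀ i j, i ≠ j → 0 ≤ A i j) (hsum : ∀ j, ∑ i, A i j = 0)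
    (hirr : MatrixIrreducible A) (τ : ℝ) (hτ : 0 < τ)
    (f : Fin N → ℝ) (hf : ∀ i, 0 < f i) :
    ∃ w : Fin N → ℝ, A.mulVec w = 0 ∧ (∑ i, w i = ∑ i, f i) ∧
      (∀ w' : Fin N → ℝ, A.mulVec w' = 0 → (∑ i, w' i = ∑ i, f i) → w' = w) ∧
      Filter.Tendsto
        (fun k : ℕ => ((((1 : Matrix (Fin N) (Fin N) ℝ) - τ • A)⁻¹) ^ k).mulVec f)
        Filter.atTop (nhds w) := by
  rcases Nat.eq_zero_or_pos N with hN | hN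
  · subst hN
    refine ⟨f, funext fun i => i.elim0, rfl, fun w' _ _ => funext fun i => i.elim0, ?_⟩
    have hconst : ∀ k : ℕ,
        ((((1 : Matrix (Fin 0) (Fin 0) ℝ) - τ • A)⁻¹) ^ k).mulVec f = f :=
      fun k => funext fun i => i.elim0
    simp only [hconst]
    exact tendsto_const_nhds
  set M := (1 : Matrix (Fin N) (Fin N) ℝ) - τ • A with hM
  set B := M⁻¹ with hBdef
  have hdet : IsUnit M.det := (det_ne hoff hsum hτ).isUnit
  have hBpos : ∀ i j, 0 < B i j := inv_pos_entries hoff hsum hirr hτ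
  have hcol : ∀ j, ∑ i, B i j = 1 := inv_col_sums hoff hsum hτ
  -- the minimal entry
  obtain ⟨p0, -, hp0⟩ := Finset.exists_min_image (Finset.univ : Finset (Fin N × Fin N))
    (fun p => B p.1 p.2) ⟨(⟨0, hN⟩, ⟨0, hN⟩), Finset.mem_univ _⟩
  set ε := B p0.1 p0.2 with hε_def
  have hε : 0 < ε := hBpos _ _
  have hεle : ∀ i j, ε ≤ B i j := fun i j => hp0 (i, j) (Finset.mem_univ _)
  set θ : ℝ := 1 - N * ε with hθ
  have hθ1 : θ < 1 := by
    have : (0:ℝ) < N * ε := mul_pos (by exact_mod_cast hN) hε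
    rw [hθ]; linarith
  have hθ0 : 0 ≤ θ := by
    have hj0 : (N:ℝ) * ε ≤ 1 := by
      have : (N:ℝ) * ε ≤ ∑ i, B i ⟨0, hN⟩ := by
        calc (N:ℝ) * ε = ∑ _i : Fin N, ε := by
              rw [Finset.sum_const, Finset.card_univ, Fintype.card_fin, nsmul_eq_mul]
          _ ≤ ∑ i, B i ⟨0, hN⟩ := Finset.sum_le_sum fun i _ => hεle i _
      rwa [hcol ⟨0, hN⟩] at this
    rw [hθ]; linarith
  set v : ℕ → (Fin N → ℝ) := fun k => (B ^ k).mulVec f with hv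
  have hvsucc : ∀ k, v (k + 1) = B.mulVec (v k) := by
    intro k
    rw [hv]
    simp only
    rw [Matrix.mulVec_mulVec, ← pow_succ']
  have hsumv : ∀ k, ∑ i, v k i = ∑ i, f i := by
    intro k
    induction k with
    | zero => rw [hv]; simp [Matrix.one_mulVec]
    | succ n ih => rw [hvsucc n, sum_mulVec hcol, ih]
  -- iterated contraction
  have hiter : ∀ k (x : Fin N → ℝ), ∑ i, x i = 0 →
      ∑ i, |(B ^ k).mulVec x i| ≤ θ ^ k * ∑ i, |x i| := by
    intro k
    induction k with
    | zero => intro x hx; simp [Matrix.one_mulVec]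
    | succ n ih =>
      intro x hx
      have hBx0 : ∑ i, B.mulVec x i = 0 := by rw [sum_mulVec hcol, hx]
      have h1 : (B ^ (n + 1)).mulVec x = (B ^ n).mulVec (B.mulVec x) := by
        rw [Matrix.mulVec_mulVec, ← pow_succ]
      rw [h1]
      calc ∑ i, |(B ^ n).mulVec (B.mulVec x) i| ≤ θ ^ n * ∑ i, |B.mulVec x i| :=
            ih (B.mulVec x) hBx0
        _ ≤ θ ^ n * (θ * ∑ i, |x i|) := by
            refine mul_le_mul_of_nonneg_left ?_ (pow_nonneg hθ0 n)
            exact l1_contraction hεle hcol hx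
        _ = θ ^ (n + 1) * ∑ i, |x i| := by ring
  -- Cauchy sequence
  set d : Fin N → ℝ := B.mulVec f - f with hd_def
  have hd : ∑ i, d i = 0 := by
    rw [hd_def]
    simp only [Pi.sub_apply, Finset.sum_sub_distrib, sum_mulVec hcol, sub_self]
  have hdiff : ∀ k, v (k + 1) - v k = (B ^ k).mulVec d := by
    intro k
    rw [hd_def, Matrix.mulVec_sub, hv]
    simp only
    rw [Matrix.mulVec_mulVec, ← pow_succ]
  set D := ∑ i, |d i| with hD
  have hcauchy : CauchySeq v := by
    apply cauchySeq_of_le_geometric θ D hθ1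
    intro k
    rw [dist_eq_norm, norm_sub_rev]
    have hnn : (0:ℝ) ≤ ∑ i, |(v (k + 1) - v k) i| := Finset.sum_nonneg fun i _ => abs_nonneg _
    have hnorm : ‖v (k + 1) - v k‖ ≤ ∑ i, |(v (k + 1) - v k) i| := by
      refine (pi_norm_le_iff_of_nonneg hnn).mpr ?_
      intro i
      have := Finset.single_le_sum (f := fun i => |(v (k + 1) - v k) i|)
        (fun i _ => abs_nonneg _) (Finset.mem_univ i)
      simpa [Real.norm_eq_abs] using this
    refine hnorm.trans ?_
    calc ∑ i, |(v (k + 1) - v k) i| = ∑ i, |(B ^ k).mulVec d i| := by rw [hdiff k]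
      _ ≤ θ ^ k * D := hiter k d hd
      _ = D * θ ^ k := mul_comm _ _
  obtain ⟨w, hw⟩ := cauchySeq_tendsto_of_complete hcauchy
  have hcont : Continuous (fun x : Fin N → ℝ => B.mulVec x) := by
    have h := LinearMap.continuous_of_finiteDimensional (𝕜 := ℝ) B.mulVecLin
    exact h.congr fun x => B.mulVecLin_apply x
  have hBw : B.mulVec w = w := by
    have h1 : Filter.Tendsto (fun k => v (k + 1)) Filter.atTop (nhds w) :=
      hw.comp (Filter.tendsto_add_atTop_nat 1)
    have h2 : Filter.Tendsto (fun k => B.mulVec (v k)) Filter.atTop (nhds (B.mulVec w)) :=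
      (hcont.tendsto w).comp hw
    have h3 : (fun k => v (k + 1)) = fun k => B.mulVec (v k) := funext hvsucc
    rw [h3] at h1
    exact tendsto_nhds_unique h2 h1
  have hMw : M.mulVec w = w := by
    conv_lhs => rw [← hBw]
    rw [Matrix.mulVec_mulVec, hBdef, Matrix.mul_nonsing_inv _ hdet, Matrix.one_mulVec]
  have hexp : M.mulVec w = w - τ • A.mulVec w := by
    rw [hM, Matrix.sub_mulVec, Matrix.one_mulVec, Matrix.smul_mulVec]
  have hτA : τ • A.mulVec w = 0 := by
    rw [hexp] at hMw
    exact sub_eq_self.mp hMw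
  have hAw : A.mulVec w = 0 := by
    rcases smul_eq_zero.mp hτA with h | h
    · exact absurd h hτ.ne'
    · exact h
  have hcontsum : Continuous (fun x : Fin N → ℝ => ∑ i, x i) :=
    continuous_finset_sum _ fun i _ => continuous_apply i
  have hsumw : ∑ i, w i = ∑ i, f i := by
    have h4 : Filter.Tendsto (fun k => ∑ i, v k i) Filter.atTop (nhds (∑ i, w i)) :=
      (hcontsum.tendsto w).comp hw
    have h5 : (fun k => ∑ i, v k i) = fun _ => ∑ i, f i := funext hsumv
    rw [h5] at h4
    exact tendsto_nhds_unique h4 tendsto_const_nhds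
  refine ⟨w, hAw, hsumw, ?_, hw⟩
  intro w' hw' hsum'
  have hMw' : M.mulVec w' = w' := by
    rw [hM, Matrix.sub_mulVec, Matrix.one_mulVec, Matrix.smul_mulVec, hw', smul_zero,
      sub_zero]
  have hBw' : B.mulVec w' = w' := by
    conv_lhs => rw [← hMw']
    rw [Matrix.mulVec_mulVec, hBdef, Matrix.nonsing_inv_mul _ hdet, Matrix.one_mulVec]
  set x : Fin N → ℝ := w' - w with hx_def
  have hxsum : ∑ i, x i = 0 := by
    rw [hx_def]
    simp only [Pi.sub_apply, Finset.sum_sub_distrib, hsum', hsumw, sub_self]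
  have hBx : B.mulVec x = x := by
    rw [hx_def, Matrix.mulVec_sub, hBw, hBw']
  have hc := l1_contraction hεle hcol hxsum
  rw [hBx] at hc
  have hS0 : (0:ℝ) ≤ ∑ i, |x i| := Finset.sum_nonneg fun i _ => abs_nonneg _
  have hSz : ∑ i, |x i| = 0 := by nlinarith
  have hxz : x = 0 := by
    funext i
    have := (Finset.sum_eq_zero_iff_of_nonneg (fun i _ => abs_nonneg (x i))).mp hSz i
      (Finset.mem_univ i)
    simpa [abs_eq_zero] using this
  rw [hx_def] at hxz
  exact sub_eq_zero.mp hxz
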